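/- Let f : [0,1] → ℝ be continuously differentiable, and let F : [0,1] × [0,1] → ℝ be continuously differentiable with F(x,x) = 0 for all x ∈ [0,1]. Then the following are equivalent: (i) for every 0 ≤ a ≤ b ≤ 1 and every ε > 0 there exists δ > 0 such that for every partition a = x₀ < x₁ < ⋯ < x_n = b with max_i (x_{i+1} − x_i) < δ one has |∑_{i=0}^{n−1} F(x_i, x_{i+1}) − ∫_a^b f(t) dt| < ε (the generalized Riemann sums of F converge to ∫_a^b f as the mesh tends to 0); (ii) for every x ∈ [0,1], the function y ↦ F(x,y) is differentiable at y = x with derivative f(x). -/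

import Mathlib

open MeasureTheory

private lemma sliceDeriv (F : ℝ → ℝ → ℝ)
    (hF : ContDiffOn ℝ 1 (fun p : ℝ × ℝ => F p.1 p.2) (Set.Icc 0 1 ×ˢ Set.Icc 0 1))
    {x y : ℝ} (hx : x ∈ Set.Icc (0:ℝ) 1) (hy : y ∈ Set.Icc (0:ℝ) 1) :
    HasDerivWithinAt (fun t => F x t)
      (fderivWithin ℝ (fun p : ℝ × ℝ => F p.1 p.2) (Set.Icc 0 1 ×ˢ Set.Icc 0 1) (x, y) (0, 1))
      (Set.Icc 0 1) y := by
  have hd := (hF.differentiableOn one_ne_zero (x, y) ⟨hx, hy⟩).hasFDerivWithinAt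
  have hmaps : Set.MapsTo (fun t : ℝ => (x, t)) (Set.Icc (0:ℝ) 1) (Set.Icc (0:ℝ) 1 ×ˢ Set.Icc (0:ℝ) 1) :=
    fun t ht => ⟨hx, ht⟩
  have hline : HasDerivWithinAt (fun t : ℝ => ((x : ℝ), t)) ((0 : ℝ), (1 : ℝ)) (Set.Icc 0 1) y :=
    HasDerivWithinAt.prodMk (hasDerivWithinAt_const y _ x) (hasDerivWithinAt_id y _)
  exact hd.comp_hasDerivWithinAt y hline hmaps

private lemma gCont (F : ℝ → ℝ → ℝ)
    (hF : ContDiffOn ℝ 1 (fun p : ℝ × ℝ => F p.1 p.2) (Set.Icc 0 1 ×ˢ Set.Icc 0 1)) :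
    ContinuousOn (fun x : ℝ =>
      fderivWithin ℝ (fun p : ℝ × ℝ => F p.1 p.2) (Set.Icc 0 1 ×ˢ Set.Icc 0 1) (x, x) (0, 1))
      (Set.Icc 0 1) := by
  have hus : UniqueDiffOn ℝ (Set.Icc (0:ℝ) 1 ×ˢ Set.Icc (0:ℝ) 1) :=
    (uniqueDiffOn_Icc one_pos).prod (uniqueDiffOn_Icc one_pos)
  have hcont : ContinuousOn (fun p : ℝ × ℝ =>
      fderivWithin ℝ (fun p : ℝ × ℝ => F p.1 p.2) (Set.Icc 0 1 ×ˢ Set.Icc 0 1) p (0, 1))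
      (Set.Icc 0 1 ×ˢ Set.Icc 0 1) :=
    (ContinuousLinearMap.apply ℝ ℝ ((0:ℝ), (1:ℝ))).continuous.comp_continuousOn
      (hF.continuousOn_fderivWithin hus le_rfl)
  exact hcont.comp (continuousOn_id.prodMk continuousOn_id) (fun x hx => ⟨hx, hx⟩)
-- continuity of h := fun p => F' p (0,1) and key estimate
private lemma keyEstimate (F : ℝ → ℝ → ℝ)
    (hF : ContDiffOn ℝ 1 (fun p : ℝ × ℝ => F p.1 p.2) (Set.Icc 0 1 ×ˢ Set.Icc 0 1))
    (hF0 : ∀ x ∈ Set.Icc (0:ℝ) 1, F x x = 0) :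
    ∀ ε > (0:ℝ), ∃ δ > (0:ℝ), ∀ x y : ℝ, x ∈ Set.Icc (0:ℝ) 1 → y ∈ Set.Icc (0:ℝ) 1 →
      x ≤ y → y - x < δ →
      |F x y - (fderivWithin ℝ (fun p : ℝ × ℝ => F p.1 p.2) (Set.Icc 0 1 ×ˢ Set.Icc 0 1) (x, x) (0, 1)) * (y - x)| ≤ ε * (y - x) := by
  set s : Set (ℝ × ℝ) := Set.Icc (0:ℝ) 1 ×ˢ Set.Icc (0:ℝ) 1 with hs
  set h : ℝ × ℝ → ℝ := fun p => fderivWithin ℝ (fun p : ℝ × ℝ => F p.1 p.2) s p (0, 1) with hh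
  have hus : UniqueDiffOn ℝ s := (uniqueDiffOn_Icc one_pos).prod (uniqueDiffOn_Icc one_pos)
  have hcont : ContinuousOn h s := by
    have := hF.continuousOn_fderivWithin hus le_rfl
    exact (ContinuousLinearMap.apply ℝ ℝ ((0:ℝ), (1:ℝ))).continuous.comp_continuousOn this
  have hcomp : IsCompact s := (isCompact_Icc).prod isCompact_Icc
  have huc := (hcomp.uniformContinuousOn_of_continuous hcont)
  rw [Metric.uniformContinuousOn_iff] at huc
  intro ε hε
  obtain ⟨δ, hδ, hucd⟩ := huc ε hε
  refine ⟨δ, hδ, ?_⟩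
  intro x y hx hy hxy hlt
  have hsub : Set.Icc x y ⊆ Set.Icc (0:ℝ) 1 := Set.Icc_subset_Icc hx.1 hy.2
  have hder : ∀ t ∈ Set.Icc x y,
      HasDerivWithinAt (fun t => F x t - h (x, x) * t) (h (x, t) - h (x, x)) (Set.Icc x y) t := by
    intro t ht
    have h1 := (sliceDeriv F hF hx (hsub ht)).mono hsub
    have h2 : HasDerivWithinAt (fun t : ℝ => h (x, x) * t) (h (x, x)) (Set.Icc x y) t := by
      simpa using (hasDerivWithinAt_id t (Set.Icc x y)).const_mul (h (x, x))
    exact h1.sub h2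
  have hbound : ∀ t ∈ Set.Icc x y, ‖h (x, t) - h (x, x)‖ ≤ ε := by
    intro t ht
    have h1 : ((x, t) : ℝ × ℝ) ∈ s := ⟨hx, hsub ht⟩
    have h2 : ((x, x) : ℝ × ℝ) ∈ s := ⟨hx, hx⟩
    have hd : dist ((x, t) : ℝ × ℝ) ((x, x) : ℝ × ℝ) < δ := by
      rw [Prod.dist_eq]
      simp only [dist_self]
      rw [Real.dist_eq]
      have : |t - x| < δ := by
        rw [abs_of_nonneg (by linarith [ht.1])]
        linarith [ht.2]
      simpa using lt_of_le_of_lt (le_max_right _ _) (max_lt hδ this) |>.trans_le le_rfl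
    have := hucd _ h1 _ h2 hd
    rw [Real.dist_eq] at this
    exact le_of_lt this
  have := Convex.norm_image_sub_le_of_norm_hasDerivWithin_le hder hbound (convex_Icc x y)
    (Set.left_mem_Icc.2 hxy) (Set.right_mem_Icc.2 hxy)
  rw [hF0 x hx] at this
  simp only [Real.norm_eq_abs] at this
  calc |F x y - h (x, x) * (y - x)|
      = |(F x y - h (x, x) * y) - (0 - h (x, x) * x)| := by ring_nf
    _ ≤ ε * |y - x| := this
    _ = ε * (y - x) := by rw [abs_of_nonneg (by linarith)]
private lemma partMono {n : ℕ} {x : ℕ → ℝ} (hinc : ∀ i < n, x i < x (i + 1)) :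
    ∀ i j, i ≤ j → j ≤ n → x i ≤ x j := by
  intro i j hij hjn
  induction j with
  | zero => simp_all
  | succ k ih =>
    rcases Nat.lt_or_ge i (k+1) with h | h
    · have : x i ≤ x k := ih (Nat.lt_succ_iff.mp h) (le_of_lt (Nat.lt_of_lt_of_le (Nat.lt_succ_self k) hjn))
      exact le_trans this (le_of_lt (hinc k (Nat.lt_of_lt_of_le (Nat.lt_succ_self k) hjn)))
    · have : i = k + 1 := le_antisymm hij h
      simp [this]

private lemma sumClose (F : ℝ → ℝ → ℝ) (g : ℝ → ℝ) (hg : ContinuousOn g (Set.Icc 0 1))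
    (key : ∀ ε > (0:ℝ), ∃ δ > (0:ℝ), ∀ x y : ℝ, x ∈ Set.Icc (0:ℝ) 1 → y ∈ Set.Icc (0:ℝ) 1 →
      x ≤ y → y - x < δ → |F x y - g x * (y - x)| ≤ ε * (y - x)) :
    ∀ a b : ℝ, 0 ≤ a → a ≤ b → b ≤ 1 → ∀ ε > (0:ℝ), ∃ δ > (0:ℝ),
      ∀ (n : ℕ) (x : ℕ → ℝ), x 0 = a → x n = b →
        (∀ i < n, x i < x (i + 1)) → (∀ i < n, x (i + 1) - x i < δ) →
        |(∑ i ∈ Finset.range n, F (x i) (x (i + 1))) - ∫ t in a..b, g t| < ε := by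
  intro a b ha0 hab hb1 ε hε
  have hε3 : (0:ℝ) < ε / 3 := by linarith
  obtain ⟨δ₁, hδ₁, hkey⟩ := key (ε/3) hε3
  have huc := (isCompact_Icc.uniformContinuousOn_of_continuous hg)
  rw [Metric.uniformContinuousOn_iff] at huc
  obtain ⟨δ₂, hδ₂, hucd⟩ := huc (ε/3) hε3
  refine ⟨min δ₁ δ₂, lt_min hδ₁ hδ₂, ?_⟩
  intro n x hx0 hxn hinc hmesh
  have hmono := partMono hinc
  have hpt : ∀ i ≤ n, x i ∈ Set.Icc (0:ℝ) 1 := by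
    intro i hi
    constructor
    · have := hmono 0 i (Nat.zero_le i) hi; rw [hx0] at this; linarith
    · have := hmono i n hi le_rfl; rw [hxn] at this; linarith
  have hint : ∀ i < n, IntervalIntegrable g MeasureTheory.volume (x i) (x (i+1)) := by
    intro i hi
    apply ContinuousOn.intervalIntegrable
    apply hg.mono
    rw [Set.uIcc_of_le (le_of_lt (hinc i hi))]
    exact Set.Icc_subset_Icc (hpt i (le_of_lt hi)).1 (hpt (i+1) hi).2
  have htel : ∫ t in a..b, g t = ∑ i ∈ Finset.range n, ∫ t in (x i)..(x (i+1)), g t := by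
    rw [intervalIntegral.sum_integral_adjacent_intervals hint, hx0, hxn]
  rw [htel, ← Finset.sum_sub_distrib]
  have hterm : ∀ i ∈ Finset.range n,
      |F (x i) (x (i+1)) - ∫ t in (x i)..(x (i+1)), g t| ≤ (2*ε/3) * (x (i+1) - x i) := by
    intro i hi
    rw [Finset.mem_range] at hi
    have hxi := hpt i (le_of_lt hi)
    have hxi1 := hpt (i+1) hi
    have hle : x i ≤ x (i+1) := le_of_lt (hinc i hi)
    have hm : x (i+1) - x i < δ₁ := lt_of_lt_of_le (hmesh i hi) (min_le_left _ _)
    have hm2 : x (i+1) - x i < δ₂ := lt_of_lt_of_le (hmesh i hi) (min_le_right _ _)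
    have h1 := hkey (x i) (x (i+1)) hxi hxi1 hle hm
    have h2 : |(∫ t in (x i)..(x (i+1)), g t) - g (x i) * (x (i+1) - x i)| ≤ (ε/3) * (x (i+1) - x i) := by
      have hconst : ∫ t in (x i)..(x (i+1)), g (x i) = g (x i) * (x (i+1) - x i) := by
        simp [intervalIntegral.integral_const, mul_comm]
      rw [← hconst, ← intervalIntegral.integral_sub (hint i hi) (by simp)]
      have hb : ∀ t ∈ Set.uIoc (x i) (x (i+1)), ‖g t - g (x i)‖ ≤ ε/3 := by
        intro t ht
        rw [Set.uIoc_of_le hle] at ht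
        have htI : t ∈ Set.Icc (0:ℝ) 1 := ⟨le_trans hxi.1 (le_of_lt ht.1), le_trans ht.2 hxi1.2⟩
        have hd : dist t (x i) < δ₂ := by
          rw [Real.dist_eq, abs_of_nonneg (by linarith [ht.1])]
          linarith [ht.2]
        have := hucd t htI (x i) hxi hd
        rw [Real.dist_eq] at this
        exact le_of_lt this
      have h3 := intervalIntegral.norm_integral_le_of_norm_le_const hb
      rw [Real.norm_eq_abs] at h3
      rw [abs_of_nonneg (by linarith : (0:ℝ) ≤ x (i+1) - x i)] at h3
      exact h3
    calc |F (x i) (x (i+1)) - ∫ t in (x i)..(x (i+1)), g t|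
        ≤ |F (x i) (x (i+1)) - g (x i) * (x (i+1) - x i)|
          + |(∫ t in (x i)..(x (i+1)), g t) - g (x i) * (x (i+1) - x i)| := by
          have tri := abs_sub_le (F (x i) (x (i+1))) (g (x i) * (x (i+1) - x i))
            (∫ t in (x i)..(x (i+1)), g t)
          rwa [abs_sub_comm (g (x i) * (x (i+1) - x i))] at tri
      _ ≤ (ε/3) * (x (i+1) - x i) + (ε/3) * (x (i+1) - x i) := add_le_add h1 h2
      _ = (2*ε/3) * (x (i+1) - x i) := by ring
  calc |∑ i ∈ Finset.range n, (F (x i) (x (i+1)) - ∫ t in (x i)..(x (i+1)), g t)|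
      ≤ ∑ i ∈ Finset.range n, |F (x i) (x (i+1)) - ∫ t in (x i)..(x (i+1)), g t| :=
        Finset.abs_sum_le_sum_abs _ _
    _ ≤ ∑ i ∈ Finset.range n, (2*ε/3) * (x (i+1) - x i) := Finset.sum_le_sum hterm
    _ = (2*ε/3) * (b - a) := by
        rw [← Finset.mul_sum, Finset.sum_range_sub (fun i => x i), hx0, hxn]
    _ ≤ (2*ε/3) * 1 := by
        apply mul_le_mul_of_nonneg_left _ (by linarith)
        linarith
    _ < ε := by linarith
private lemma nonposOfIntegralZero (φ : ℝ → ℝ) (hφ : ContinuousOn φ (Set.Icc 0 1))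
    (hint : ∀ a b : ℝ, 0 ≤ a → a ≤ b → b ≤ 1 → ∫ t in a..b, φ t = 0) :
    ∀ x ∈ Set.Icc (0:ℝ) 1, φ x ≤ 0 := by
  intro x₀ hx₀
  by_contra hpos
  push_neg at hpos
  have hc := hφ x₀ hx₀
  rw [Metric.continuousWithinAt_iff] at hc
  obtain ⟨δ, hδ, hcd⟩ := hc (φ x₀ / 2) (by linarith)
  set a := max 0 (x₀ - δ/2) with ha
  set b := min 1 (x₀ + δ/2) with hb
  have ha0 : 0 ≤ a := le_max_left _ _
  have hb1 : b ≤ 1 := min_le_left _ _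
  have hax : a ≤ x₀ := max_le hx₀.1 (by linarith)
  have hxb : x₀ ≤ b := le_min hx₀.2 (by linarith)
  have hab : a < b := by
    rcases lt_or_ge x₀ 1 with h | h
    · have : x₀ < b := lt_min h (by linarith)
      linarith
    · have hx1 : x₀ = 1 := le_antisymm hx₀.2 h
      have : a < 1 := max_lt one_pos (by rw [hx1]; linarith)
      calc a < 1 := this
        _ ≤ b := by rw [hb]; exact le_min le_rfl (by rw [hx1]; linarith)
  have hlow : ∀ y ∈ Set.Icc a b, φ x₀ / 2 ≤ φ y := by
    intro y hy
    have hyI : y ∈ Set.Icc (0:ℝ) 1 := ⟨le_trans ha0 hy.1, le_trans hy.2 hb1⟩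
    have hdy : dist y x₀ < δ := by
      rw [Real.dist_eq, abs_lt]
      constructor
      · have : x₀ - δ/2 ≤ a := le_max_right _ _
        have := hy.1; linarith
      · have : b ≤ x₀ + δ/2 := min_le_right _ _
        have := hy.2; linarith
    have := hcd hyI hdy
    rw [Real.dist_eq, abs_lt] at this
    linarith [this.1]
  have hiφ : IntervalIntegrable φ MeasureTheory.volume a b := by
    apply ContinuousOn.intervalIntegrable
    apply hφ.mono
    rw [Set.uIcc_of_le (le_of_lt hab)]
    exact Set.Icc_subset_Icc ha0 hb1
  have hmono := intervalIntegral.integral_mono_on (le_of_lt hab)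
    (intervalIntegrable_const : IntervalIntegrable (fun _ => φ x₀ / 2) MeasureTheory.volume a b)
    hiφ hlow
  rw [hint a b ha0 (le_of_lt hab) hb1] at hmono
  rw [intervalIntegral.integral_const] at hmono
  have : 0 < (b - a) * (φ x₀ / 2) := by
    apply mul_pos (by linarith) (by linarith)
  rw [smul_eq_mul] at hmono
  linarith

theorem generalized_riemann_sums_converge_iff_diagonal_derivative
    (f : ℝ → ℝ) (F : ℝ → ℝ → ℝ)
    (hf : ContDiffOn ℝ 1 f (Set.Icc 0 1))
    (hF : ContDiffOn ℝ 1 (fun p : ℝ × ℝ => F p.1 p.2) (Set.Icc 0 1 ×ˢ Set.Icc 0 1))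
    (hF0 : ∀ x ∈ Set.Icc (0:ℝ) 1, F x x = 0) :
    (∀ a b : ℝ, 0 ≤ a → a ≤ b → b ≤ 1 → ∀ ε > (0:ℝ), ∃ δ > (0:ℝ),
        ∀ (n : ℕ) (x : ℕ → ℝ), x 0 = a → x n = b →
          (∀ i < n, x i < x (i + 1)) → (∀ i < n, x (i + 1) - x i < δ) →
          |(∑ i ∈ Finset.range n, F (x i) (x (i + 1))) - ∫ t in a..b, f t| < ε) ↔
    (∀ x ∈ Set.Icc (0:ℝ) 1,
        HasDerivWithinAt (fun y => F x y) (f x) (Set.Icc 0 1) x) := by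
  set g : ℝ → ℝ := fun x =>
    fderivWithin ℝ (fun p : ℝ × ℝ => F p.1 p.2) (Set.Icc 0 1 ×ˢ Set.Icc 0 1) (x, x) (0, 1) with hgdef
  have hgcont : ContinuousOn g (Set.Icc 0 1) := gCont F hF
  have hsum := sumClose F g hgcont (keyEstimate F hF hF0)
  have hfcont : ContinuousOn f (Set.Icc 0 1) := hf.continuousOn
  constructor
  · -- (i) → (ii)
    intro hyp
    -- integrals of f and g agree on all subintervals
    have hI : ∀ a b : ℝ, 0 ≤ a → a ≤ b → b ≤ 1 →
        (∫ t in a..b, f t) = ∫ t in a..b, g t := by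
      intro a b ha0 hab hb1
      rcases eq_or_lt_of_le hab with rfl | hab'
      · simp
      by_contra hne
      set c := |(∫ t in a..b, f t) - ∫ t in a..b, g t| with hc
      have hcpos : 0 < c := abs_pos.2 (sub_ne_zero.2 hne)
      obtain ⟨δ₁, hδ₁, h1⟩ := hyp a b ha0 hab hb1 (c/2) (by linarith)
      obtain ⟨δ₂, hδ₂, h2⟩ := hsum a b ha0 hab hb1 (c/2) (by linarith)
      set δ := min δ₁ δ₂ with hδdef
      have hδ : 0 < δ := lt_min hδ₁ hδ₂
      obtain ⟨n, hn⟩ := exists_nat_gt ((b - a) / δ)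
      have hnpos : 0 < n := by
        have h0 : (0:ℝ) < (b - a) / δ := div_pos (by linarith) hδ
        have : (0:ℝ) < n := h0.trans hn
        exact_mod_cast this
      have hnR : (0:ℝ) < n := by exact_mod_cast hnpos
      set x : ℕ → ℝ := fun i => a + i * ((b - a) / n) with hxdef
      have hmesh0 : (b - a) / n < δ := by
        rw [div_lt_iff₀ hnR]
        rw [div_lt_iff₀ hδ] at hn
        linarith [hn]
      have hx0 : x 0 = a := by simp [hxdef]
      have hxn : x n = b := by
        simp only [hxdef]
        field_simp
        ring
      have hstep : ∀ i : ℕ, x (i + 1) - x i = (b - a) / n := by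
        intro i
        simp only [hxdef]
        push_cast
        ring
      clear_value x
      have hpos : (0:ℝ) < (b - a) / n := div_pos (by linarith) hnR
      have hinc : ∀ i < n, x i < x (i + 1) := by
        intro i _
        have := hstep i
        linarith
      have hmesh1 : ∀ i < n, x (i + 1) - x i < δ₁ := by
        intro i _
        rw [hstep i]
        exact hmesh0.trans_le (min_le_left _ _)
      have hmesh2 : ∀ i < n, x (i + 1) - x i < δ₂ := by
        intro i _
        rw [hstep i]
        exact hmesh0.trans_le (min_le_right _ _)
      have e1 := h1 n x hx0 hxn hinc hmesh1
      have e2 := h2 n x hx0 hxn hinc hmesh2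
      have : c < c := by
        calc c = |(∫ t in a..b, f t) - ∫ t in a..b, g t| := hc
          _ ≤ |(∑ i ∈ Finset.range n, F (x i) (x (i + 1))) - ∫ t in a..b, f t|
              + |(∑ i ∈ Finset.range n, F (x i) (x (i + 1))) - ∫ t in a..b, g t| := by
            have tri := abs_sub_le (∫ t in a..b, f t)
              (∑ i ∈ Finset.range n, F (x i) (x (i + 1))) (∫ t in a..b, g t)
            rwa [abs_sub_comm (∫ t in a..b, f t) (∑ i ∈ Finset.range n, F (x i) (x (i + 1)))] at tri
          _ < c/2 + c/2 := add_lt_add e1 e2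
          _ = c := by ring
      exact lt_irrefl c this
    -- hence f = g on [0,1]
    have hintf : ∀ a b : ℝ, 0 ≤ a → a ≤ b → b ≤ 1 →
        IntervalIntegrable f volume a b ∧ IntervalIntegrable g volume a b := by
      intro a b ha0 hab hb1
      constructor <;>
      · apply ContinuousOn.intervalIntegrable
        first
        | exact hfcont.mono (by rw [Set.uIcc_of_le hab]; exact Set.Icc_subset_Icc ha0 hb1)
        | exact hgcont.mono (by rw [Set.uIcc_of_le hab]; exact Set.Icc_subset_Icc ha0 hb1)
    have hfg : ∀ x ∈ Set.Icc (0:ℝ) 1, f x = g x := by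
      intro x hx
      have hA := nonposOfIntegralZero (fun t => f t - g t) (hfcont.sub hgcont)
        (fun a b ha0 hab hb1 => by
          rw [intervalIntegral.integral_sub (hintf a b ha0 hab hb1).1 (hintf a b ha0 hab hb1).2,
            hI a b ha0 hab hb1, sub_self]) x hx
      have hB := nonposOfIntegralZero (fun t => g t - f t) (hgcont.sub hfcont)
        (fun a b ha0 hab hb1 => by
          rw [intervalIntegral.integral_sub (hintf a b ha0 hab hb1).2 (hintf a b ha0 hab hb1).1,
            hI a b ha0 hab hb1, sub_self]) x hx
      linarith
    intro x hx
    rw [hfg x hx]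
    exact sliceDeriv F hF hx hx
  · -- (ii) → (i)
    intro hyp
    have hfg : ∀ x ∈ Set.Icc (0:ℝ) 1, f x = g x := by
      intro x hx
      have hu : UniqueDiffWithinAt ℝ (Set.Icc (0:ℝ) 1) x := uniqueDiffOn_Icc one_pos x hx
      have h1 := (hyp x hx).derivWithin hu
      have h2 := (sliceDeriv F hF hx hx).derivWithin hu
      rw [← h1]
      exact h2
    intro a b ha0 hab hb1 ε hε
    obtain ⟨δ, hδ, hδprop⟩ := hsum a b ha0 hab hb1 ε hε
    refine ⟨δ, hδ, ?_⟩
    intro n x hx0 hxn hinc hmesh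
    have : (∫ t in a..b, f t) = ∫ t in a..b, g t := by
      apply intervalIntegral.integral_congr
      intro t ht
      rw [Set.uIcc_of_le hab] at ht
      exact hfg t ⟨le_trans ha0 ht.1, le_trans ht.2 hb1⟩
    rw [this]
    exact hδprop n x hx0 hxn hinc hmesh
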